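/- Let w : [t₀,∞) → ℝ satisfy: for all sufficiently large τ with η(τ) := sup_{[τ,τ+L]} |w| small enough, there exists s with |s| ≤ B η(τ) and η(τ + L + s) ≤ (1/2) η(τ). Assume additionally η(τ₀) ≤ min{δ₀, L/(2B)} for some admissible starting time τ₀, and |w| is Lipschitz with constant M. Then there exist constants C > 0 and α > 0 and a shift σ with |σ| ≤ L such that |w(t + σ)| ≤ C e^{-α (t - τ₀)} for all t ≥ τ₀, where α = (log 2)/L. (Iteration lemma converting an 'improvement of approximation' step into exponential decay.) -/

import Mathlib

open Real

/-- Windowed sup norm of `|w|` over `[τ, τ + L]`. -/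
noncomputable def windowSup (w : ℝ → ℝ) (L τ : ℝ) : ℝ :=
  sSup ((fun t => |w t|) '' Set.Icc τ (τ + L))

namespace IterAux

noncomputable def stepOf (w : ℝ → ℝ) (t₀ L B δ₀ : ℝ)
    (hstep : ∀ τ, t₀ ≤ τ → windowSup w L τ ≤ δ₀ →
      ∃ s : ℝ, |s| ≤ B * windowSup w L τ ∧ windowSup w L (τ + L + s) ≤ windowSup w L τ / 2)
    (τ : ℝ) : ℝ :=
  if h : t₀ ≤ τ ∧ windowSup w L τ ≤ δ₀ then (hstep τ h.1 h.2).choose else 0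

noncomputable def seqT (w : ℝ → ℝ) (t₀ L B δ₀ : ℝ)
    (hstep : ∀ τ, t₀ ≤ τ → windowSup w L τ ≤ δ₀ →
      ∃ s : ℝ, |s| ≤ B * windowSup w L τ ∧ windowSup w L (τ + L + s) ≤ windowSup w L τ / 2)
    (τ₀ : ℝ) : ℕ → ℝ
  | 0 => τ₀
  | n + 1 => seqT w t₀ L B δ₀ hstep τ₀ n + L
      + stepOf w t₀ L B δ₀ hstep (seqT w t₀ L B δ₀ hstep τ₀ n)

end IterAux

set_option maxHeartbeats 1600000

/-- the iteration lemma converting an `improvement of approximation' step into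
exponential decay after a bounded shift `σ`. -/
theorem iteration_lemma (w : ℝ → ℝ) (t₀ L B δ₀ M : ℝ)
    (hL : 0 < L) (hB : 0 < B) (hδ₀ : 0 < δ₀)
    (hLip : ∀ s t : ℝ, |w s - w t| ≤ M * |s - t|)
    (hstep : ∀ τ, t₀ ≤ τ → windowSup w L τ ≤ δ₀ →
      ∃ s : ℝ, |s| ≤ B * windowSup w L τ ∧ windowSup w L (τ + L + s) ≤ windowSup w L τ / 2)
    (τ₀ : ℝ) (hτ₀ : t₀ ≤ τ₀)
    (hsmall : windowSup w L τ₀ ≤ min δ₀ (L / (2 * B))) :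
    ∃ C > 0, ∃ σ : ℝ, |σ| ≤ L ∧
      ∀ t, τ₀ ≤ t → |w (t + σ)| ≤ C * Real.exp (-(Real.log 2 / L) * (t - τ₀)) := by
  set η : ℝ → ℝ := windowSup w L with hη
  -- M is nonnegative
  have hM : 0 ≤ M := by
    have h := hLip (t₀ + 1) t₀
    have h2 : |(t₀ + 1) - t₀| = 1 := by norm_num
    rw [h2, mul_one] at h
    exact le_trans (abs_nonneg _) h
  -- basic windowSup facts
  have hbdd : ∀ τ : ℝ, BddAbove ((fun t => |w t|) '' Set.Icc τ (τ + L)) := by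
    intro τ
    refine ⟨|w τ| + M * L, ?_⟩
    rintro x ⟨t, ht, rfl⟩
    have h1 : |w t| - |w τ| ≤ |w t - w τ| := abs_sub_abs_le_abs_sub _ _
    have h2 := hLip t τ
    have h3 : |t - τ| ≤ L := by
      rw [abs_le]; constructor
      · linarith [ht.1]
      · linarith [ht.2]
    nlinarith [abs_nonneg (t - τ)]
  have hmem : ∀ τ t : ℝ, τ ≤ t → t ≤ τ + L → |w t| ≤ η τ := by
    intro τ t h1 h2
    exact le_csSup (hbdd τ) ⟨t, ⟨h1, h2⟩, rfl⟩
  have hη0 : ∀ τ : ℝ, 0 ≤ η τ := fun τ =>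
    le_trans (abs_nonneg _) (hmem τ τ le_rfl (by linarith))
  have hηδ : η τ₀ ≤ δ₀ := le_trans hsmall (min_le_left _ _)
  have hηB : B * η τ₀ ≤ L / 2 := by
    have h := le_trans hsmall (min_le_right _ _)
    have h2 : B * (L / (2 * B)) = L / 2 := by field_simp
    nlinarith [mul_le_mul_of_nonneg_left h hB.le]
  -- the sequence of times
  set T : ℕ → ℝ := IterAux.seqT w t₀ L B δ₀ hstep τ₀ with hT
  set sfun : ℕ → ℝ := fun n => IterAux.stepOf w t₀ L B δ₀ hstep (T n) with hsfun
  have hTsucc : ∀ n, T (n + 1) = T n + L + sfun n := fun n => rfl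
  have hT0 : T 0 = τ₀ := rfl
  -- main invariant
  have hinv : ∀ j : ℕ, t₀ ≤ T j ∧ η (T j) ≤ η τ₀ / 2 ^ j := by
    intro j
    induction j with
    | zero => exact ⟨by simpa [hT0] using hτ₀, by simp [hT0]⟩
    | succ n ih =>
      have hle : η (T n) ≤ η τ₀ := by
        refine le_trans ih.2 ?_
        have : (1:ℝ) ≤ 2 ^ n := one_le_pow₀ (by norm_num : (1:ℝ) ≤ 2)
        exact div_le_self (hη0 τ₀) this
      have hc : t₀ ≤ T n ∧ windowSup w L (T n) ≤ δ₀ := ⟨ih.1, le_trans hle hηδ⟩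
      have hsval : sfun n = (hstep (T n) hc.1 hc.2).choose := by
        simp only [hsfun, IterAux.stepOf, dif_pos hc]
      have hspec := (hstep (T n) hc.1 hc.2).choose_spec
      have habs : |sfun n| ≤ B * η (T n) := by rw [hsval]; exact hspec.1
      have habs' : |sfun n| ≤ L / 2 := by
        refine le_trans habs (le_trans ?_ hηB)
        exact mul_le_mul_of_nonneg_left hle hB.le
      constructor
      · have := (abs_le.mp habs').1
        rw [hTsucc n]
        linarith [ih.1]
      · have h2 : η (T (n + 1)) ≤ η (T n) / 2 := by
          rw [hTsucc n, hsval]; exact hspec.2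
        refine le_trans h2 ?_
        rw [pow_succ, ← div_div]
        have := ih.2
        linarith
  -- bound on the steps
  have hsb : ∀ j : ℕ, |sfun j| ≤ (L / 2) * (1 / 2) ^ j := by
    intro j
    have hc : t₀ ≤ T j ∧ windowSup w L (T j) ≤ δ₀ :=
      ⟨(hinv j).1, le_trans (le_trans (hinv j).2
        (div_le_self (hη0 τ₀) (one_le_pow₀ (by norm_num : (1:ℝ) ≤ 2)))) hηδ⟩
    have hsval : sfun j = (hstep (T j) hc.1 hc.2).choose := by
      simp only [hsfun, IterAux.stepOf, dif_pos hc]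
    have habs : |sfun j| ≤ B * η (T j) := by rw [hsval]; exact (hstep (T j) hc.1 hc.2).choose_spec.1
    have h1 : B * η (T j) ≤ B * (η τ₀ / 2 ^ j) := mul_le_mul_of_nonneg_left (hinv j).2 hB.le
    have h2 : B * (η τ₀ / 2 ^ j) = (B * η τ₀) / 2 ^ j := by ring
    have h3 : (B * η τ₀) / 2 ^ j ≤ (L / 2) / 2 ^ j := by gcongr
    calc |sfun j| ≤ B * η (T j) := habs
      _ ≤ (B * η τ₀) / 2 ^ j := by rw [← h2]; exact h1
      _ ≤ (L / 2) / 2 ^ j := h3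
      _ = (L / 2) * (1 / 2) ^ j := by rw [div_pow, one_pow]; ring
  have hgeo : Summable (fun j : ℕ => (L / 2) * (1 / 2 : ℝ) ^ j) :=
    (summable_geometric_of_lt_one (by norm_num) (by norm_num)).mul_left _
  have hsum : Summable sfun := by
    refine Summable.of_norm_bounded hgeo ?_
    intro j
    simpa [Real.norm_eq_abs] using hsb j
  set σ : ℝ := ∑' j, sfun j with hσ
  have htsum_geo : ∑' j : ℕ, (L / 2) * (1 / 2 : ℝ) ^ j = L := by
    rw [tsum_mul_left, tsum_geometric_of_lt_one (by norm_num) (by norm_num)]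
    norm_num
  have hσL : |σ| ≤ L := by
    have h1 : ‖σ‖ ≤ ∑' j, ‖sfun j‖ := norm_tsum_le_tsum_norm (by simpa [Real.norm_eq_abs] using hsum.abs)
    have h2 : ∑' j, ‖sfun j‖ ≤ ∑' j : ℕ, (L / 2) * (1 / 2 : ℝ) ^ j := by
      refine Summable.tsum_le_tsum ?_ (by simpa [Real.norm_eq_abs] using hsum.abs) hgeo
      intro j; simpa [Real.norm_eq_abs] using hsb j
    rw [Real.norm_eq_abs] at h1
    linarith [htsum_geo ▸ h2]
  -- partial sums bound
  have hpart : ∀ n : ℕ, |∑ i ∈ Finset.range n, sfun i| ≤ L := by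
    intro n
    refine le_trans (Finset.abs_sum_le_sum_abs _ _) ?_
    refine le_trans (Finset.sum_le_sum fun i _ => hsb i) ?_
    refine le_trans (Summable.sum_le_tsum (Finset.range n) (fun i _ => by positivity) hgeo) ?_
    rw [htsum_geo]
  -- formula for T
  have hTform : ∀ n : ℕ, T n = τ₀ + n * L + ∑ i ∈ Finset.range n, sfun i := by
    intro n
    induction n with
    | zero => simp [hT0]
    | succ n ih =>
      rw [hTsucc n, ih, Finset.sum_range_succ]
      push_cast
      ring
  -- the decay constant
  refine ⟨8 * (η τ₀ + M * L) + 1, by nlinarith [hη0 τ₀], σ, hσL, ?_⟩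
  intro t ht
  set C : ℝ := 8 * (η τ₀ + M * L) + 1 with hC
  have hCpos : 0 < C := by nlinarith [hη0 τ₀]
  have hα : 0 < Real.log 2 / L := div_pos (Real.log_pos (by norm_num)) hL
  by_cases hcase : t + σ < τ₀
  · -- t + σ is to the left of τ₀; use Lipschitz from τ₀
    have h1 : τ₀ - (t + σ) ≤ L := by
      have := (abs_le.mp hσL).1
      linarith
    have h2 : |w (t + σ)| ≤ |w τ₀| + M * L := by
      have ha := hLip (t + σ) τ₀
      have hb : |t + σ - τ₀| = τ₀ - (t + σ) := by
        rw [abs_of_nonpos (by linarith)]; ring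
      have hc : |w (t + σ)| - |w τ₀| ≤ |w (t + σ) - w τ₀| := abs_sub_abs_le_abs_sub _ _
      nlinarith
    have h3 : |w (t + σ)| ≤ η τ₀ + M * L :=
      le_trans h2 (by linarith [hmem τ₀ τ₀ le_rfl (by linarith)])
    have h4 : t - τ₀ ≤ L := by
      have := (abs_le.mp hσL).1
      linarith
    have h5 : Real.exp (-(Real.log 2 / L) * L) ≤ Real.exp (-(Real.log 2 / L) * (t - τ₀)) := by
      apply Real.exp_le_exp.mpr
      nlinarith
    have h6 : Real.exp (-(Real.log 2 / L) * L) = 1 / 2 := by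
      rw [show -(Real.log 2 / L) * L = -Real.log 2 by field_simp]
      rw [Real.exp_neg, Real.exp_log (by norm_num)]
      norm_num
    rw [h6] at h5
    have h7 : 0 ≤ Real.exp (-(Real.log 2 / L) * (t - τ₀)) := Real.exp_nonneg _
    nlinarith
  · push_neg at hcase
    -- find the window containing t + σ
    have hexists : ∃ n : ℕ, t + σ < T (n + 1) := by
      obtain ⟨n, hn⟩ := exists_nat_gt ((t + σ - τ₀ + L) / L)
      refine ⟨n, ?_⟩
      have h1 : t + σ - τ₀ + L < n * L := by
        rw [div_lt_iff₀ hL] at hn; linarith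
      have h2 := hpart (n + 1)
      have h3 := hTform (n + 1)
      have := (abs_le.mp h2).1
      push_cast at h3
      nlinarith
    obtain ⟨j, hj1, hj0⟩ : ∃ j : ℕ, t + σ < T (j + 1) ∧ T j ≤ t + σ := by
      refine ⟨Nat.find hexists, Nat.find_spec hexists, ?_⟩
      rcases Nat.eq_zero_or_pos (Nat.find hexists) with h | h
      · rw [h, hT0]; exact hcase
      · obtain ⟨k, hk⟩ := Nat.exists_eq_succ_of_ne_zero (Nat.pos_iff_ne_zero.mp h)
        have hmin := Nat.find_min hexists (hk ▸ Nat.lt_succ_self k)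
        push_neg at hmin
        rw [hk]
        exact hmin
    -- bound on |w (t + σ)|
    have hbound : |w (t + σ)| ≤ (η τ₀ + M * L) / 2 ^ j := by
      have hinvj := hinv j
      by_cases hin : t + σ ≤ T j + L
      · have h1 : |w (t + σ)| ≤ η (T j) := hmem (T j) (t + σ) hj0 hin
        have h2 : η (T j) ≤ η τ₀ / 2 ^ j := hinvj.2
        have h3 : (0:ℝ) ≤ M * L / 2 ^ j := by positivity
        have h4 : η τ₀ / 2 ^ j + M * L / 2 ^ j = (η τ₀ + M * L) / 2 ^ j := by ring
        linarith
      · push_neg at hin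
        have hj1' : t + σ < T j + L + sfun j := by rw [← hTsucc j]; exact hj1
        have hsj : t + σ - (T j + L) ≤ sfun j := by linarith
        have hsj2 : sfun j ≤ (L / 2) * (1 / 2) ^ j := le_trans (le_abs_self _) (hsb j)
        have hwx : |w (T j + L)| ≤ η (T j) := hmem (T j) (T j + L) (by linarith) le_rfl
        have ha := hLip (t + σ) (T j + L)
        have hb : |t + σ - (T j + L)| = t + σ - (T j + L) := abs_of_pos (by linarith)
        have hc : |w (t + σ)| - |w (T j + L)| ≤ |w (t + σ) - w (T j + L)| :=
          abs_sub_abs_le_abs_sub _ _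
        have hd : |w (t + σ)| ≤ η (T j) + M * ((L / 2) * (1 / 2) ^ j) := by
          have hm := mul_le_mul_of_nonneg_left (hsj.trans hsj2) hM
          rw [hb] at ha
          linarith
        have h2 : η (T j) ≤ η τ₀ / 2 ^ j := hinvj.2
        have he : M * ((L / 2) * (1 / 2) ^ j) ≤ M * L / 2 ^ j := by
          have h1 : M * ((L / 2) * (1 / 2) ^ j) = (M * L) / 2 ^ (j + 1) := by
            rw [div_pow, one_pow, pow_succ]; ring
          rw [h1]
          have h2p : (2:ℝ) ^ j ≤ 2 ^ (j + 1) := by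
            rw [pow_succ]
            nlinarith [pow_pos (show (0:ℝ) < 2 by norm_num) j]
          exact div_le_div_of_nonneg_left (by positivity) (by positivity) h2p
        have h4 : η τ₀ / 2 ^ j + M * L / 2 ^ j = (η τ₀ + M * L) / 2 ^ j := by ring
        linarith
    -- bound on t - τ₀
    have htime : t - τ₀ ≤ (j + 3) * L := by
      have h1 := hTform (j + 1)
      have h2 := (abs_le.mp (hpart (j + 1))).2
      have h3 := (abs_le.mp hσL).1
      push_cast at h1
      nlinarith
    -- exponential lower bound
    have hE : (1:ℝ) / 2 ^ (j + 3) ≤ Real.exp (-(Real.log 2 / L) * (t - τ₀)) := by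
      have h5 : Real.exp (-(Real.log 2 / L) * ((j + 3) * L))
          ≤ Real.exp (-(Real.log 2 / L) * (t - τ₀)) := by
        apply Real.exp_le_exp.mpr
        nlinarith
      have h6 : -(Real.log 2 / L) * (((j:ℝ) + 3) * L) = -(((j:ℕ) + 3 : ℕ) * Real.log 2) := by
        push_cast
        field_simp
      have h7 : Real.exp (-(((j:ℕ) + 3 : ℕ) * Real.log 2)) = 1 / 2 ^ (j + 3) := by
        rw [Real.exp_neg, Real.exp_nat_mul, Real.exp_log (by norm_num : (0:ℝ) < 2)]
        norm_num
      calc (1:ℝ) / 2 ^ (j + 3) = Real.exp (-(((j:ℕ) + 3 : ℕ) * Real.log 2)) := h7.symm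
        _ = Real.exp (-(Real.log 2 / L) * (((j:ℝ) + 3) * L)) := by rw [h6]
        _ ≤ _ := by
            apply Real.exp_le_exp.mpr
            nlinarith
    -- conclude
    have hpow : (0:ℝ) < 2 ^ j := by positivity
    have h8 : (2:ℝ) ^ (j + 3) = 8 * 2 ^ j := by rw [pow_add]; ring
    have hEnn : 0 ≤ Real.exp (-(Real.log 2 / L) * (t - τ₀)) := Real.exp_nonneg _
    calc |w (t + σ)| ≤ (η τ₀ + M * L) / 2 ^ j := hbound
      _ ≤ C * (1 / 2 ^ (j + 3)) := by
          rw [h8]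
          rw [div_le_iff₀ hpow]
          have : C * (1 / (8 * 2 ^ j)) * 2 ^ j = C / 8 := by field_simp
          rw [this]
          rw [hC]
          nlinarith [hη0 τ₀]
      _ ≤ C * Real.exp (-(Real.log 2 / L) * (t - τ₀)) :=
          mul_le_mul_of_nonneg_left hE hCpos.le
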